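/- Let U ⊆ ℝⁿ be open and let L : U × Matrix(r×n, ℝ) → ℝ be smooth and satisfy, for each fixed x ∈ U, the fundamental equations in the entries of ẋ: (∂²L/∂ẋ_F^A∂ẋ_G^B) + (∂²L/∂ẋ_G^A∂ẋ_F^B) = 0 for all rows F, G ∈ {1,…,r} and columns A, B ∈ {1,…,n}. Then for every open V ⊆ ℝ^r, every smooth map γ : V → U, every A ∈ {1,…,n} and every t ∈ V, the Euler–Lagrange expression contains no second derivatives of γ; explicitly, Σ_F ∂/∂t^F [ (∂L/∂ẋ_F^A)(γ(t), Dγ(t)) ] = Σ_{F,B} (∂γ^B/∂t^F)(t) · (∂²L/∂x^B∂ẋ_F^A)(γ(t), Dγ(t)), where Dγ(t) is the r×n matrix ((∂γ^A/∂t^F)(t)). -/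

import Mathlib

open MeasureTheory
open scoped BigOperators

noncomputable section

/-- Product of matrices given as functions (entry `(i,k)` is `∑ j, M i j * N j k`). -/
def mmul {a b c : ℕ} (M : Fin a → Fin b → ℝ) (N : Fin b → Fin c → ℝ) :
    Fin a → Fin c → ℝ :=
  fun i k => ∑ j, M i j * N j k

/-- Determinant of a square matrix given as a function. -/
def fdet {a : ℕ} (M : Fin a → Fin a → ℝ) : ℝ :=
  Matrix.det (Matrix.of M)

/-- Partial derivative of a function of a matrix with respect to the `(i,j)` entry. -/
def pdM {a b : ℕ} (L : (Fin a → Fin b → ℝ) → ℝ) (i : Fin a) (j : Fin b)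
    (m : Fin a → Fin b → ℝ) : ℝ :=
  deriv (fun t : ℝ => L (fun i' j' => m i' j' + (if i' = i ∧ j' = j then t else 0))) 0

/-- Partial derivative of a function of a vector with respect to the `i`-th coordinate. -/
def pdV {a : ℕ} (f : (Fin a → ℝ) → ℝ) (i : Fin a) (x : Fin a → ℝ) : ℝ :=
  deriv (fun t : ℝ => f (fun i' => x i' + (if i' = i then t else 0))) 0

/-- The fundamental equations for a function of an `a × b` matrix:
for all rows `i₁, i₂` and columns `j₁, j₂`,
`∂²L/∂m_{i₁}^{j₁}∂m_{i₂}^{j₂} + ∂²L/∂m_{i₂}^{j₁}∂m_{i₁}^{j₂} = 0`. -/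
def FundEqs {a b : ℕ} (L : (Fin a → Fin b → ℝ) → ℝ) : Prop :=
  ∀ (i₁ i₂ : Fin a) (j₁ j₂ : Fin b) (m : Fin a → Fin b → ℝ),
    pdM (fun m' => pdM L i₂ j₂ m') i₁ j₁ m + pdM (fun m' => pdM L i₁ j₂ m') i₂ j₁ m = 0

/-- The velocity matrix of a path `γ`: `(vel γ t) F A = ∂γ^A/∂t^F (t)`. -/
def vel {r n : ℕ} (γ : (Fin r → ℝ) → (Fin n → ℝ)) (t : Fin r → ℝ) :
    Fin r → Fin n → ℝ :=
  fun F A => pdV (fun s => γ s A) F t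

/-- The matrix of gradients of a copath `f`: `(grad f x) A K = ∂f^K/∂x^A (x)`. -/
def grad {n k : ℕ} (f : (Fin n → ℝ) → (Fin k → ℝ)) (x : Fin n → ℝ) :
    Fin n → Fin k → ℝ :=
  fun A K => pdV (fun y => f y K) A x

/-- An even `r`-form on an open set `U ⊆ ℝⁿ`: a smooth function `L(x, ẋ)` of a point
`x` and an `r × n` matrix `ẋ` which is covariant (`L(x, h·ẋ) = det h · L(x, ẋ)` for
invertible `h`) and satisfies the fundamental equations in the entries of `ẋ`. -/
def IsEvenForm {n r : ℕ} (U : Set (Fin n → ℝ))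
    (L : (Fin n → ℝ) → (Fin r → Fin n → ℝ) → ℝ) : Prop :=
  ContDiffOn ℝ (⊤ : ℕ∞)
      (fun q : (Fin n → ℝ) × (Fin r → Fin n → ℝ) => L q.1 q.2)
      (U ×ˢ (Set.univ : Set (Fin r → Fin n → ℝ))) ∧
  (∀ x ∈ U, ∀ (xdot : Fin r → Fin n → ℝ) (h : Fin r → Fin r → ℝ), fdet h ≠ 0 →
    L x (mmul h xdot) = fdet h * L x xdot) ∧
  (∀ x ∈ U, FundEqs (L x))

/-- The differential of a Lagrangian of paths `L(x, ẋ)`: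
`ΔL(x, (ẋ; ẏ)) = (−1)^r Σ_A ẏ^A (∂L/∂x^A − Σ_{F,B} ẋ_F^B ∂²L/∂x^B∂ẋ_F^A)`,
where `ẋ` consists of the first `r` rows and `ẏ` is the last row of the argument. -/
def Dform {n r : ℕ} (L : (Fin n → ℝ) → (Fin r → Fin n → ℝ) → ℝ) :
    (Fin n → ℝ) → (Fin (r + 1) → Fin n → ℝ) → ℝ :=
  fun x M => (-1 : ℝ) ^ r * ∑ A, M (Fin.last r) A *
    (pdV (fun x' => L x' (fun F => M (Fin.castSucc F))) A x
      - ∑ F, ∑ B, M (Fin.castSucc F) B *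
          pdV (fun x' => pdM (L x') F A (fun G => M (Fin.castSucc G))) B x)

/-- An even mixed form of codegree `k` and additional degree `r` on an open set
`U ⊆ ℝⁿ`: a smooth function `𝓛(x, p, w)` which is right-covariant, left-covariant,
admissible, and satisfies the fundamental equations in the entries of the stacked
`(n+r) × k` matrix (`p` over `w`). -/
def IsMixedForm {n k r : ℕ} (U : Set (Fin n → ℝ))
    (L : (Fin n → ℝ) → (Fin n → Fin k → ℝ) → (Fin r → Fin k → ℝ) → ℝ) : Prop :=
  ContDiffOn ℝ (⊤ : ℕ∞)
      (fun q : (Fin n → ℝ) × (Fin n → Fin k → ℝ) × (Fin r → Fin k → ℝ) =>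
        L q.1 q.2.1 q.2.2)
      (U ×ˢ (Set.univ : Set ((Fin n → Fin k → ℝ) × (Fin r → Fin k → ℝ)))) ∧
  (∀ x ∈ U, ∀ (p : Fin n → Fin k → ℝ) (w : Fin r → Fin k → ℝ) (g : Fin k → Fin k → ℝ),
    fdet g ≠ 0 → L x (mmul p g) (mmul w g) = fdet g * L x p w) ∧
  (∀ x ∈ U, ∀ (p : Fin n → Fin k → ℝ) (w : Fin r → Fin k → ℝ) (h : Fin r → Fin r → ℝ),
    fdet h ≠ 0 → L x p (mmul h w) = fdet h * L x p w) ∧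
  (∀ x ∈ U, ∀ (p : Fin n → Fin k → ℝ) (w : Fin r → Fin k → ℝ) (a : Fin n → Fin r → ℝ),
    L x (p + mmul a w) w = L x p w) ∧
  (∀ x ∈ U, FundEqs (fun m : Fin (n + r) → Fin k → ℝ =>
    L x (fun A => m (Fin.castAdd r A)) (fun F => m (Fin.natAdd n F))))

/-- The differential of a mixed Lagrangian `𝓛(x, p, w)`:
`Δ𝓛(x, p, ŵ) = (−1)^r Σ_{K,A} w'^K ∂²𝓛/∂x^A∂p_A^K (x, p, w)`, where `ŵ` has first
`r` rows `w` and last row `w'`. -/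
def Dmix {n k r : ℕ}
    (L : (Fin n → ℝ) → (Fin n → Fin k → ℝ) → (Fin r → Fin k → ℝ) → ℝ) :
    (Fin n → ℝ) → (Fin n → Fin k → ℝ) → (Fin (r + 1) → Fin k → ℝ) → ℝ :=
  fun x p what => (-1 : ℝ) ^ r * ∑ K, ∑ A, what (Fin.last r) K *
    pdV (fun x' => pdM (fun p' => L x' p' (fun F => what (Fin.castSucc F))) A K p) A x

/-- An even dual form of codegree `k` on an open set `U ⊆ ℝⁿ`: a smooth function
`𝓛(x, p)` of a point `x` and an `n × k` matrix `p` of momenta which is covariant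
(`𝓛(x, p·g) = det g · 𝓛(x, p)` for invertible `g`) and satisfies the fundamental
equations in the entries of `p`. -/
def IsDualForm {n k : ℕ} (U : Set (Fin n → ℝ))
    (L : (Fin n → ℝ) → (Fin n → Fin k → ℝ) → ℝ) : Prop :=
  ContDiffOn ℝ (⊤ : ℕ∞)
      (fun q : (Fin n → ℝ) × (Fin n → Fin k → ℝ) => L q.1 q.2)
      (U ×ˢ (Set.univ : Set (Fin n → Fin k → ℝ))) ∧
  (∀ x ∈ U, ∀ (p : Fin n → Fin k → ℝ) (g : Fin k → Fin k → ℝ), fdet g ≠ 0 →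
    L x (mmul p g) = fdet g * L x p) ∧
  (∀ x ∈ U, FundEqs (L x))

/-- The identity matrix as a function. -/
def idm (n : ℕ) : Fin n → Fin n → ℝ := fun i j => if i = j then 1 else 0

lemma deriv_along {E : Type*} [NormedAddCommGroup E] [NormedSpace ℝ E]
    {f : E → ℝ} {f' : E →L[ℝ] ℝ} {x : E} (hf : HasFDerivAt f f' x) (v : E) :
    deriv (fun t : ℝ => f (x + t • v)) 0 = f' v := by
  have hc : HasDerivAt (fun t : ℝ => x + t • v) v 0 := by
    simpa using ((hasDerivAt_id (0 : ℝ)).smul_const v).const_add x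
  have hf' : HasFDerivAt f f' ((fun t : ℝ => x + t • v) 0) := by simpa using hf
  exact (hf'.comp_hasDerivAt 0 hc).deriv

lemma pdV_eq {a : ℕ} {f : (Fin a → ℝ) → ℝ} {f' : (Fin a → ℝ) →L[ℝ] ℝ} {x : Fin a → ℝ}
    (hf : HasFDerivAt f f' x) (i : Fin a) :
    pdV f i x = f' (Pi.single i 1 : Fin a → ℝ) := by
  have : pdV f i x = deriv (fun t : ℝ => f (x + t • (Pi.single i 1 : Fin a → ℝ))) 0 := by
    unfold pdV
    congr 1
    funext tt
    congr 1
    funext i'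
    simp [Pi.single_apply]
  rw [this, deriv_along hf]

lemma pdM_eq {a b : ℕ} {L : (Fin a → Fin b → ℝ) → ℝ} {L' : (Fin a → Fin b → ℝ) →L[ℝ] ℝ}
    {m : Fin a → Fin b → ℝ} (hL : HasFDerivAt L L' m) (i : Fin a) (j : Fin b) :
    pdM L i j m = L' (Pi.single i (Pi.single j 1) : Fin a → Fin b → ℝ) := by
  have : pdM L i j m = deriv (fun t : ℝ => L (m + t • (Pi.single i (Pi.single j 1) : Fin a → Fin b → ℝ))) 0 := by
    unfold pdM
    congr 1
    funext tt
    congr 1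
    funext i' j'
    simp [Pi.single_apply]
    split_ifs with h1 h2 h3 <;> simp_all
  rw [this, deriv_along hL]

lemma pdV_line {a : ℕ} (f : (Fin a → ℝ) → ℝ) (i : Fin a) (x : Fin a → ℝ) :
    pdV f i x = deriv (fun τ : ℝ => f (x + τ • (Pi.single i 1 : Fin a → ℝ))) 0 := by
  unfold pdV
  congr 1
  funext tt
  congr 1
  funext i'
  simp [Pi.single_apply]

lemma vec_decomp {a : ℕ} (v : Fin a → ℝ) :
    v = ∑ i, v i • (Pi.single i 1 : Fin a → ℝ) := by
  funext j
  simp [Finset.sum_apply, Pi.single_apply]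

lemma mat_decomp {a b : ℕ} (M : Fin a → Fin b → ℝ) :
    M = ∑ i, ∑ j, M i j • (Pi.single i (Pi.single j 1) : Fin a → Fin b → ℝ) := by
  funext i' j'
  simp [Finset.sum_apply, apply_ite (fun g : Fin b → ℝ => g j'), Pi.single_apply,
    mul_ite, Finset.sum_ite_eq]

lemma hasDerivAt_pi_of {ι : Type*} [Fintype ι] {E : ι → Type*}
    [∀ i, NormedAddCommGroup (E i)] [∀ i, NormedSpace ℝ (E i)]
    {f : ℝ → ∀ i, E i} {f' : ∀ i, E i} {x : ℝ}
    (h : ∀ i, HasDerivAt (fun t => f t i) (f' i) x) : HasDerivAt f f' x := by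
  rw [hasDerivAt_iff_hasFDerivAt]
  apply hasFDerivAt_pi''
  intro i
  exact (h i).hasFDerivAt

lemma antisym_cancel {r n : ℕ} (m : Fin r → Fin r → Fin n → ℝ)
    (C : Fin r → Fin n → Fin r → ℝ)
    (hm : ∀ F G B, m F G B = m G F B)
    (hC : ∀ F G B, C G B F + C F B G = 0) :
    ∑ F, ∑ G, ∑ B, m F G B * C G B F = 0 := by
  have key : (∑ F, ∑ G, ∑ B, m F G B * C G B F)
      = -∑ F, ∑ G, ∑ B, m F G B * C G B F := by
    calc ∑ F, ∑ G, ∑ B, m F G B * C G B F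
        = ∑ F, ∑ G, ∑ B, m G F B * C F B G := Finset.sum_comm
      _ = ∑ F, ∑ G, ∑ B, m F G B * -(C G B F) := by
          refine Finset.sum_congr rfl fun F _ => Finset.sum_congr rfl fun G _ =>
            Finset.sum_congr rfl fun B _ => ?_
          rw [hm G F B]
          have := hC F G B
          have : C F B G = -(C G B F) := by linarith
          rw [this]
      _ = -∑ F, ∑ G, ∑ B, m F G B * C G B F := by
          simp [mul_neg]
  linarith


/-- If the smooth Lagrangian `L(x, ẋ)` satisfies the fundamental
equations in `ẋ` for each `x ∈ U`, then along any smooth path `γ : V → U` the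
Euler–Lagrange expression contains no second derivatives of `γ`:
`Σ_F ∂/∂t^F [(∂L/∂ẋ_F^A)(γ(t), Dγ(t))] = Σ_{F,B} (∂γ^B/∂t^F)(t) · (∂²L/∂x^B∂ẋ_F^A)(γ(t), Dγ(t))`. -/
theorem statement_1 (n r : ℕ) (U : Set (Fin n → ℝ)) (hU : IsOpen U)
    (L : (Fin n → ℝ) → (Fin r → Fin n → ℝ) → ℝ)
    (hL : ContDiffOn ℝ (⊤ : ℕ∞)
      (fun q : (Fin n → ℝ) × (Fin r → Fin n → ℝ) => L q.1 q.2)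
      (U ×ˢ (Set.univ : Set (Fin r → Fin n → ℝ))))
    (hfund : ∀ x ∈ U, FundEqs (L x)) :
    ∀ (V : Set (Fin r → ℝ)), IsOpen V →
      ∀ (γ : (Fin r → ℝ) → (Fin n → ℝ)),
        ContDiffOn ℝ (⊤ : ℕ∞) γ V → Set.MapsTo γ V U →
        ∀ (A : Fin n), ∀ t ∈ V,
          ∑ F, pdV (fun s => pdM (L (γ s)) F A (vel γ s)) F t
            = ∑ F, ∑ B, vel γ t F B *
                pdV (fun x => pdM (L x) F A (vel γ t)) B (γ t) := by
  
  intro V hV γ hγ hmaps A t ht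
  classical
  have hx₀U : γ t ∈ U := hmaps ht
  have h1top : (1 : WithTop ℕ∞) ≤ ((⊤ : ℕ∞) : WithTop ℕ∞) := by exact_mod_cast le_top
  have h2top : (2 : WithTop ℕ∞) ≤ ((⊤ : ℕ∞) : WithTop ℕ∞) := by norm_cast
  have hsucc : ((⊤ : ℕ∞) : WithTop ℕ∞) + 1 ≤ ((⊤ : ℕ∞) : WithTop ℕ∞) := by
    exact_mod_cast (le_top : (⊤ : ℕ∞) + 1 ≤ ⊤)
  have hΩ : IsOpen (U ×ˢ (Set.univ : Set (Fin r → Fin n → ℝ))) := hU.prod isOpen_univ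
  set Φ' := fderiv ℝ (fun q : (Fin n → ℝ) × (Fin r → Fin n → ℝ) => L q.1 q.2) with hΦ'def
  have hΦ'cd : ContDiffOn ℝ (⊤ : ℕ∞) Φ' (U ×ˢ (Set.univ : Set (Fin r → Fin n → ℝ))) :=
    hL.fderiv_of_isOpen hΩ hsucc
  have hΦat : ∀ q ∈ U ×ˢ (Set.univ : Set (Fin r → Fin n → ℝ)),
      HasFDerivAt (fun q : (Fin n → ℝ) × (Fin r → Fin n → ℝ) => L q.1 q.2) (Φ' q) q :=
    fun q hq => ((hL.contDiffAt (hΩ.mem_nhds hq)).differentiableAt (by simp)).hasFDerivAt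
  have hq₀Ω : ((γ t, vel γ t) : (Fin n → ℝ) × (Fin r → Fin n → ℝ))
      ∈ U ×ˢ (Set.univ : Set (Fin r → Fin n → ℝ)) := ⟨hx₀U, trivial⟩
  set H := fderiv ℝ Φ' (γ t, vel γ t) with hHdef
  have hΦ'q₀ : HasFDerivAt Φ' H ((γ t, vel γ t)) :=
    ((hΦ'cd.contDiffAt (hΩ.mem_nhds hq₀Ω)).differentiableAt (by simp)).hasFDerivAt
  -- Step A: first derivative of L in the matrix slot
  have stepA : ∀ x ∈ U, ∀ (m : Fin r → Fin n → ℝ) (F' : Fin r) (B' : Fin n),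
      pdM (L x) F' B' m = Φ' (x, m)
        ((0, Pi.single F' (Pi.single B' 1)) : (Fin n → ℝ) × (Fin r → Fin n → ℝ)) := by
    intro x hx m F' B'
    have hincl : HasFDerivAt (fun m' : Fin r → Fin n → ℝ =>
        ((x, m') : (Fin n → ℝ) × (Fin r → Fin n → ℝ)))
        ((0 : (Fin r → Fin n → ℝ) →L[ℝ] (Fin n → ℝ)).prod
          (ContinuousLinearMap.id ℝ (Fin r → Fin n → ℝ))) m :=
      (hasFDerivAt_const x m).prodMk (hasFDerivAt_id m)
    have hq : ((x, m) : (Fin n → ℝ) × (Fin r → Fin n → ℝ))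
        ∈ U ×ˢ (Set.univ : Set (Fin r → Fin n → ℝ)) := ⟨hx, trivial⟩
    have hcomp : HasFDerivAt (L x)
        ((Φ' (x, m)).comp ((0 : (Fin r → Fin n → ℝ) →L[ℝ] (Fin n → ℝ)).prod
          (ContinuousLinearMap.id ℝ (Fin r → Fin n → ℝ)))) m :=
      (hΦat _ hq).comp m hincl
    rw [pdM_eq hcomp F' B']
    simp
  -- velocities as genuine derivatives
  have velV : ∀ s ∈ V, ∀ (G : Fin r) (B : Fin n),
      vel γ s G B = fderiv ℝ γ s (Pi.single G 1 : Fin r → ℝ) B := by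
    intro s hs G B
    have hγs : DifferentiableAt ℝ γ s :=
      (hγ.contDiffAt (hV.mem_nhds hs)).differentiableAt (by simp)
    have hcomp : HasFDerivAt (fun s' => γ s' B)
        ((ContinuousLinearMap.proj (R := ℝ) (φ := fun _ : Fin n => ℝ) B).comp (fderiv ℝ γ s)) s :=
      ((ContinuousLinearMap.proj (R := ℝ) (φ := fun _ : Fin n => ℝ) B).hasFDerivAt).comp s
        hγs.hasFDerivAt
    show pdV (fun s' => γ s' B) G s = _
    rw [pdV_eq hcomp G]
    rfl
  have φdiff : ∀ (G : Fin r) (B : Fin n),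
      DifferentiableAt ℝ (fun s => fderiv ℝ γ s (Pi.single G 1 : Fin r → ℝ) B) t := by
    intro G B
    have d1 : DifferentiableAt ℝ (fderiv ℝ γ) t :=
      ((hγ.contDiffAt (hV.mem_nhds ht)).fderiv_right hsucc).differentiableAt (by simp)
    have d2 : DifferentiableAt ℝ (fun s => fderiv ℝ γ s (Pi.single G 1 : Fin r → ℝ)) t :=
      d1.clm_apply (differentiableAt_const _)
    exact differentiableAt_pi.1 d2 B
  -- symmetry of the second derivatives of γ
  have Msymm : ∀ (F G : Fin r) (B : Fin n),
      fderiv ℝ (fun s => fderiv ℝ γ s (Pi.single G 1 : Fin r → ℝ) B) t (Pi.single F 1)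
        = fderiv ℝ (fun s => fderiv ℝ γ s (Pi.single F 1 : Fin r → ℝ) B) t (Pi.single G 1) := by
    intro F G B
    have hγB : ContDiffAt ℝ (⊤ : ℕ∞) (fun s => γ s B) t :=
      contDiffAt_pi.1 (hγ.contDiffAt (hV.mem_nhds ht)) B
    have hdd : DifferentiableAt ℝ (fderiv ℝ (fun s => γ s B)) t :=
      (hγB.fderiv_right hsucc).differentiableAt (by simp)
    have hkey : ∀ (G' : Fin r),
        fderiv ℝ (fun s => fderiv ℝ γ s (Pi.single G' 1 : Fin r → ℝ) B) t
          = (fderiv ℝ (fderiv ℝ (fun s => γ s B)) t).flip (Pi.single G' 1) := by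
      intro G'
      have heq : (fun s => fderiv ℝ γ s (Pi.single G' 1 : Fin r → ℝ) B)
          =ᶠ[nhds t] (fun s => fderiv ℝ (fun s' => γ s' B) s (Pi.single G' 1 : Fin r → ℝ)) := by
        filter_upwards [hV.mem_nhds ht] with s hs
        have hγs : DifferentiableAt ℝ γ s :=
          (hγ.contDiffAt (hV.mem_nhds hs)).differentiableAt (by simp)
        have hc := (((ContinuousLinearMap.proj (R := ℝ) (φ := fun _ : Fin n => ℝ) B).hasFDerivAt
          (x := γ s)).comp s hγs.hasFDerivAt).fderiv
        have hfun : (fun s' => γ s' B)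
            = ((ContinuousLinearMap.proj (R := ℝ) (φ := fun _ : Fin n => ℝ) B) ∘ γ) := rfl
        rw [hfun, hc]
        rfl
      rw [heq.fderiv_eq, fderiv_clm_apply hdd (differentiableAt_const _)]
      simp
    rw [hkey G, hkey F]
    simp only [ContinuousLinearMap.flip_apply]
    exact (hγB.isSymmSndFDerivAt (by rw [minSmoothness_of_isRCLikeNormedField]; exact h2top)) (Pi.single F 1) (Pi.single G 1)
  -- mixed second derivative x / matrix
  have stepI : ∀ (F : Fin r) (B : Fin n),
      pdV (fun x => pdM (L x) F A (vel γ t)) B (γ t)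
        = H ((Pi.single B 1, 0) : (Fin n → ℝ) × (Fin r → Fin n → ℝ))
            ((0, Pi.single F (Pi.single A 1)) : (Fin n → ℝ) × (Fin r → Fin n → ℝ)) := by
    intro F B
    have hj : HasFDerivAt (fun x : Fin n → ℝ =>
        ((x, vel γ t) : (Fin n → ℝ) × (Fin r → Fin n → ℝ)))
        ((ContinuousLinearMap.id ℝ (Fin n → ℝ)).prod 0) (γ t) :=
      (hasFDerivAt_id _).prodMk (hasFDerivAt_const _ _)
    have hcomp := hΦ'q₀.comp (γ t) hj
    have happ := hcomp.clm_apply (hasFDerivAt_const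
      ((0, Pi.single F (Pi.single A 1)) : (Fin n → ℝ) × (Fin r → Fin n → ℝ)) (γ t))
    have heq : (fun x => pdM (L x) F A (vel γ t)) =ᶠ[nhds (γ t)]
        (fun x => (Φ' ∘ fun x : Fin n → ℝ =>
          ((x, vel γ t) : (Fin n → ℝ) × (Fin r → Fin n → ℝ))) x
          ((0, Pi.single F (Pi.single A 1)) : (Fin n → ℝ) × (Fin r → Fin n → ℝ))) := by
      filter_upwards [hU.mem_nhds hx₀U] with x hx
      exact stepA x hx (vel γ t) F A
    have hfin := happ.congr_of_eventuallyEq heq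
    rw [pdV_eq hfin B]
    simp
  -- pure matrix second derivative
  have stepII : ∀ (F G : Fin r) (B : Fin n),
      pdM (fun m' => pdM (L (γ t)) F A m') G B (vel γ t)
        = H ((0, Pi.single G (Pi.single B 1)) : (Fin n → ℝ) × (Fin r → Fin n → ℝ))
            ((0, Pi.single F (Pi.single A 1)) : (Fin n → ℝ) × (Fin r → Fin n → ℝ)) := by
    intro F G B
    have hj : HasFDerivAt (fun m' : Fin r → Fin n → ℝ =>
        ((γ t, m') : (Fin n → ℝ) × (Fin r → Fin n → ℝ)))
        ((0 : (Fin r → Fin n → ℝ) →L[ℝ] (Fin n → ℝ)).prod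
          (ContinuousLinearMap.id ℝ (Fin r → Fin n → ℝ))) (vel γ t) :=
      (hasFDerivAt_const _ _).prodMk (hasFDerivAt_id _)
    have hcomp := hΦ'q₀.comp (vel γ t) hj
    have happ := hcomp.clm_apply (hasFDerivAt_const
      ((0, Pi.single F (Pi.single A 1)) : (Fin n → ℝ) × (Fin r → Fin n → ℝ)) (vel γ t))
    have hfin := happ.congr_of_eventuallyEq
      (Filter.Eventually.of_forall fun m' => stepA (γ t) hx₀U m' F A)
    rw [pdM_eq hfin G B]
    simp
  -- the key derivative computation along coordinate lines
  have keyF : ∀ F : Fin r,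
      pdV (fun s => pdM (L (γ s)) F A (vel γ s)) F t
        = H ((fderiv ℝ γ t (Pi.single F 1),
              fun G B => fderiv ℝ (fun s => fderiv ℝ γ s (Pi.single G 1 : Fin r → ℝ) B) t
                (Pi.single F 1)) : (Fin n → ℝ) × (Fin r → Fin n → ℝ))
            ((0, Pi.single F (Pi.single A 1)) : (Fin n → ℝ) × (Fin r → Fin n → ℝ)) := by
    intro F
    set ℓ := fun τ : ℝ => t + τ • (Pi.single F 1 : Fin r → ℝ) with hℓdef
    have hℓ : HasDerivAt ℓ (Pi.single F 1 : Fin r → ℝ) 0 := by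
      simpa [hℓdef] using
        ((hasDerivAt_id (0 : ℝ)).smul_const (Pi.single F 1 : Fin r → ℝ)).const_add t
    have hℓ0 : ℓ 0 = t := by simp [hℓdef]
    have hVτ : ℓ ⁻¹' V ∈ nhds (0 : ℝ) := by
      apply hℓ.continuousAt.preimage_mem_nhds
      rw [hℓ0]
      exact hV.mem_nhds ht
    have hγt' : DifferentiableAt ℝ γ t :=
      (hγ.contDiffAt (hV.mem_nhds ht)).differentiableAt (by simp)
    have hγℓ : HasFDerivAt γ (fderiv ℝ γ t) (ℓ 0) := by rw [hℓ0]; exact hγt'.hasFDerivAt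
    have hc1 : HasDerivAt (fun τ => γ (ℓ τ)) (fderiv ℝ γ t (Pi.single F 1)) 0 :=
      hγℓ.comp_hasDerivAt 0 hℓ
    have hc2 : HasDerivAt
        (fun τ => (fun G B => fderiv ℝ γ (ℓ τ) (Pi.single G 1 : Fin r → ℝ) B))
        (fun G B => fderiv ℝ (fun s => fderiv ℝ γ s (Pi.single G 1 : Fin r → ℝ) B) t
          (Pi.single F 1)) 0 := by
      apply hasDerivAt_pi_of
      intro G
      apply hasDerivAt_pi_of
      intro B
      have hφ : HasFDerivAt (fun s => fderiv ℝ γ s (Pi.single G 1 : Fin r → ℝ) B)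
          (fderiv ℝ (fun s => fderiv ℝ γ s (Pi.single G 1 : Fin r → ℝ) B) t) (ℓ 0) := by
        rw [hℓ0]; exact (φdiff G B).hasFDerivAt
      exact hφ.comp_hasDerivAt 0 hℓ
    have hc : HasDerivAt (fun τ =>
        ((γ (ℓ τ), fun G B => fderiv ℝ γ (ℓ τ) (Pi.single G 1 : Fin r → ℝ) B) :
          (Fin n → ℝ) × (Fin r → Fin n → ℝ)))
        ((fderiv ℝ γ t (Pi.single F 1),
          fun G B => fderiv ℝ (fun s => fderiv ℝ γ s (Pi.single G 1 : Fin r → ℝ) B) t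
            (Pi.single F 1))) 0 := hc1.prodMk hc2
    have hq0eq : ((γ (ℓ 0), fun G B => fderiv ℝ γ (ℓ 0) (Pi.single G 1 : Fin r → ℝ) B) :
        (Fin n → ℝ) × (Fin r → Fin n → ℝ)) = (γ t, vel γ t) := by
      rw [hℓ0]
      exact Prod.ext rfl (by funext G B; exact (velV t ht G B).symm)
    have hΦ'ℓ : HasFDerivAt Φ' H
        ((γ (ℓ 0), fun G B => fderiv ℝ γ (ℓ 0) (Pi.single G 1 : Fin r → ℝ) B)) := by
      rw [hq0eq]; exact hΦ'q₀
    have hΦc := hΦ'ℓ.comp_hasDerivAt 0 hc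
    have happ := (ContinuousLinearMap.apply ℝ ℝ
      (((0, Pi.single F (Pi.single A 1))) :
        (Fin n → ℝ) × (Fin r → Fin n → ℝ))).hasFDerivAt.comp_hasDerivAt 0 hΦc
    have heq : (fun τ => pdM (L (γ (ℓ τ))) F A (vel γ (ℓ τ))) =ᶠ[nhds (0 : ℝ)]
        (fun τ => (ContinuousLinearMap.apply ℝ ℝ
          (((0, Pi.single F (Pi.single A 1))) : (Fin n → ℝ) × (Fin r → Fin n → ℝ)))
          ((Φ' ∘ fun τ' => ((γ (ℓ τ'),
            fun G B => fderiv ℝ γ (ℓ τ') (Pi.single G 1 : Fin r → ℝ) B) :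
              (Fin n → ℝ) × (Fin r → Fin n → ℝ))) τ)) := by
      filter_upwards [hVτ] with τ hτ
      have h1 := stepA (γ (ℓ τ)) (hmaps hτ) (vel γ (ℓ τ)) F A
      have h2 : vel γ (ℓ τ) =
          fun G B => fderiv ℝ γ (ℓ τ) (Pi.single G 1 : Fin r → ℝ) B :=
        funext fun G => funext fun B => velV (ℓ τ) hτ G B
      rw [h1, h2]
      rfl
    have hfin := happ.congr_of_eventuallyEq heq
    rw [pdV_line]
    have := hfin.deriv
    simp only [ContinuousLinearMap.apply_apply] at this
    exact this
  -- assemble everything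
  have hsplit : ∀ (a : Fin n → ℝ) (b : Fin r → Fin n → ℝ)
      (w : (Fin n → ℝ) × (Fin r → Fin n → ℝ)),
      H ((a, b)) w = H ((a, 0)) w + H ((0, b)) w := by
    intro a b w
    have hab : ((a, b) : (Fin n → ℝ) × (Fin r → Fin n → ℝ))
        = (a, (0 : Fin r → Fin n → ℝ)) + ((0 : Fin n → ℝ), b) := by
      simp [Prod.ext_iff]
    rw [hab, map_add, ContinuousLinearMap.add_apply]
  have lhs_eq : ∑ F, pdV (fun s => pdM (L (γ s)) F A (vel γ s)) F t
      = (∑ F, H ((fderiv ℝ γ t (Pi.single F 1), 0) :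
            (Fin n → ℝ) × (Fin r → Fin n → ℝ))
          ((0, Pi.single F (Pi.single A 1)) : (Fin n → ℝ) × (Fin r → Fin n → ℝ)))
        + ∑ F, H ((0, fun G B =>
              fderiv ℝ (fun s => fderiv ℝ γ s (Pi.single G 1 : Fin r → ℝ) B) t
                (Pi.single F 1)) : (Fin n → ℝ) × (Fin r → Fin n → ℝ))
          ((0, Pi.single F (Pi.single A 1)) : (Fin n → ℝ) × (Fin r → Fin n → ℝ)) := by
    rw [← Finset.sum_add_distrib]
    exact Finset.sum_congr rfl fun F _ => by rw [keyF F, hsplit]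
  rw [lhs_eq]
  have term2 : (∑ F, H ((0, fun G B =>
        fderiv ℝ (fun s => fderiv ℝ γ s (Pi.single G 1 : Fin r → ℝ) B) t
          (Pi.single F 1)) : (Fin n → ℝ) × (Fin r → Fin n → ℝ))
      ((0, Pi.single F (Pi.single A 1)) : (Fin n → ℝ) × (Fin r → Fin n → ℝ))) = 0 := by
    have hexp : ∀ F : Fin r, H ((0, fun G B =>
          fderiv ℝ (fun s => fderiv ℝ γ s (Pi.single G 1 : Fin r → ℝ) B) t
            (Pi.single F 1)) : (Fin n → ℝ) × (Fin r → Fin n → ℝ))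
        ((0, Pi.single F (Pi.single A 1)) : (Fin n → ℝ) × (Fin r → Fin n → ℝ))
        = ∑ G, ∑ B, fderiv ℝ (fun s => fderiv ℝ γ s (Pi.single G 1 : Fin r → ℝ) B) t
              (Pi.single F 1)
            * H ((0, Pi.single G (Pi.single B 1)) : (Fin n → ℝ) × (Fin r → Fin n → ℝ))
              ((0, Pi.single F (Pi.single A 1)) : (Fin n → ℝ) × (Fin r → Fin n → ℝ)) := by
      intro F
      have hdec : ((0, fun G B =>
            fderiv ℝ (fun s => fderiv ℝ γ s (Pi.single G 1 : Fin r → ℝ) B) t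
              (Pi.single F 1)) : (Fin n → ℝ) × (Fin r → Fin n → ℝ))
          = ∑ G, ∑ B, fderiv ℝ (fun s => fderiv ℝ γ s (Pi.single G 1 : Fin r → ℝ) B) t
                (Pi.single F 1)
              • ((0, Pi.single G (Pi.single B 1)) :
                  (Fin n → ℝ) × (Fin r → Fin n → ℝ)) := by
        apply Prod.ext
        · simp [Prod.fst_sum]
        · conv_lhs => rw [mat_decomp (fun G B =>
            fderiv ℝ (fun s => fderiv ℝ γ s (Pi.single G 1 : Fin r → ℝ) B) t
              (Pi.single F 1))]
          simp [Prod.snd_sum]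
      rw [hdec]
      rw [map_sum, ContinuousLinearMap.sum_apply]
      refine Finset.sum_congr rfl fun G _ => ?_
      rw [map_sum, ContinuousLinearMap.sum_apply]
      refine Finset.sum_congr rfl fun B _ => ?_
      rw [_root_.map_smul, ContinuousLinearMap.smul_apply, smul_eq_mul]
    rw [Finset.sum_congr rfl fun F _ => hexp F]
    apply antisym_cancel
      (m := fun F G B => fderiv ℝ (fun s => fderiv ℝ γ s (Pi.single G 1 : Fin r → ℝ) B) t
        (Pi.single F 1))
      (C := fun G B F' =>
        H ((0, Pi.single G (Pi.single B 1)) : (Fin n → ℝ) × (Fin r → Fin n → ℝ))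
          ((0, Pi.single F' (Pi.single A 1)) : (Fin n → ℝ) × (Fin r → Fin n → ℝ)))
    · intro F G B
      exact Msymm F G B
    · intro F G B
      have hf := hfund (γ t) hx₀U G F B A (vel γ t)
      rw [stepII F G B, stepII G F B] at hf
      exact hf
  rw [term2, add_zero]
  refine Finset.sum_congr rfl fun F _ => ?_
  have hdec : ((fderiv ℝ γ t (Pi.single F 1), 0) : (Fin n → ℝ) × (Fin r → Fin n → ℝ))
      = ∑ B, fderiv ℝ γ t (Pi.single F 1) B
          • ((Pi.single B 1, 0) : (Fin n → ℝ) × (Fin r → Fin n → ℝ)) := by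
    apply Prod.ext
    · conv_lhs => rw [vec_decomp (fderiv ℝ γ t (Pi.single F 1))]
      simp [Prod.fst_sum]
    · simp [Prod.snd_sum]
  rw [hdec, map_sum, ContinuousLinearMap.sum_apply]
  refine Finset.sum_congr rfl fun B _ => ?_
  rw [_root_.map_smul, ContinuousLinearMap.smul_apply, smul_eq_mul]
  congr 1
  · exact (velV t ht F B).symm
  · exact (stepI F B).symm
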